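/- Let 0<q<1 and let l be a positive integer. The ℤ-graded algebra O(L_q(l;1,l)) with grading determined by deg c = 1, deg d = -1 is strongly graded: L_m L_n = L_{m+n} for all m,n ∈ ℤ; in particular 1 ∈ L_1 L_{-1} and 1 ∈ L_{-1} L_1. -/

import Mathlib

private lemma prod_one_sub_smul {A : Type*} [Ring A] [Algebra ℂ A] (x : A) (L : List ℂ) :
    ∃ y ∈ Submodule.span ℂ (Set.range fun k : ℕ => x ^ (k+1)),
      (L.map (fun a => (1 : A) - a • x)).prod = 1 + y := by
  set N := Submodule.span ℂ (Set.range fun k : ℕ => x ^ (k+1)) with hN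
  have hxN : x ∈ N := Submodule.subset_span ⟨0, by simp⟩
  have hmul : ∀ y ∈ N, x * y ∈ N := by
    intro y hy
    refine Submodule.span_induction (p := fun y _ => x * y ∈ N) ?_ ?_ ?_ ?_ hy
    · rintro _ ⟨k, rfl⟩
      exact Submodule.subset_span ⟨k+1, by rw [← pow_succ']⟩
    · simp
    · intro a b _ _ ha hb; rw [mul_add]; exact N.add_mem ha hb
    · intro t a _ ha; rw [mul_smul_comm]; exact N.smul_mem t ha
  induction L with
  | nil => exact ⟨0, N.zero_mem, by simp⟩
  | cons t L ih =>
    obtain ⟨y, hy, hprod⟩ := ih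
    refine ⟨y - t • x - t • (x * y), ?_, ?_⟩
    · exact N.sub_mem (N.sub_mem hy (N.smul_mem t hxN)) (N.smul_mem t (hmul y hy))
    · rw [List.map_cons, List.prod_cons, hprod, sub_mul, one_mul, mul_add, mul_one]
      rw [smul_mul_assoc]; abel


/-- The defining relations of the quantum lens space `O(L_q(l;1,l))`:
`cd = q^l dc`, `cd* = q^l d*c`, `dd* = d*d`, `cc* = ∏_{m=0}^{l-1}(1-q^{2m}dd*)`,
`c*c = ∏_{m=1}^{l}(1-q^{-2m}dd*)`. -/
structure LensRels {A : Type*} [Ring A] [Algebra ℂ A] [StarRing A]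
    (q : ℝ) (l : ℕ) (c d : A) : Prop where
  rel1 : c * d = ((q : ℂ) ^ l) • (d * c)
  rel2 : c * star d = ((q : ℂ) ^ l) • (star d * c)
  rel3 : d * star d = star d * d
  rel4 : c * star c =
      ((List.range l).map (fun m => 1 - ((q : ℂ) ^ (2 * m)) • (d * star d))).prod
  rel5 : star c * c =
      ((List.range l).map (fun m => 1 - ((q : ℂ)⁻¹ ^ (2 * (m + 1))) • (d * star d))).prod

/-- `A` together with `c d : A` is the universal unital complex `*`-algebra on
generators `c, d` subject to the `O(L_q(l;1,l))` relations. -/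
def IsUniversalLens (q : ℝ) (l : ℕ) {A : Type*} [Ring A] [Algebra ℂ A] [StarRing A]
    [StarModule ℂ A] (c d : A) : Prop :=
  LensRels q l c d ∧
  ∀ (B : Type) [Ring B] [Algebra ℂ B] [StarRing B] [StarModule ℂ B],
    ∀ c' d' : B, LensRels q l c' d' → ∃! f : A →⋆ₐ[ℂ] B, f c = c' ∧ f d = d'

/-- The ℤ-graded algebra `O(L_q(l;1,l))` with grading determined by
`deg c = 1`, `deg d = -1` is strongly graded: `L_m L_n = L_{m+n}` for all `m, n ∈ ℤ`;
in particular `1 ∈ L_1 L_{-1}` and `1 ∈ L_{-1} L_1`. -/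
theorem lens_space_strongly_graded
    (q : ℝ) (hq0 : 0 < q) (hq1 : q < 1) (l : ℕ) (hl : 0 < l)
    {A : Type*} [Ring A] [Algebra ℂ A] [StarRing A] [StarModule ℂ A]
    (c d : A) (huniv : IsUniversalLens q l c d)
    (𝒜 : ℤ → Submodule ℂ A) [GradedAlgebra 𝒜]
    (hc : c ∈ 𝒜 1) (hcs : star c ∈ 𝒜 (-1))
    (hd : d ∈ 𝒜 (-1)) (hds : star d ∈ 𝒜 1) :
    (∀ m n : ℤ, 𝒜 m * 𝒜 n = 𝒜 (m + n)) ∧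
    (1 : A) ∈ 𝒜 1 * 𝒜 (-1) ∧ (1 : A) ∈ 𝒜 (-1) * 𝒜 1 := by
  obtain ⟨⟨_, _, rel3, rel4, rel5⟩, -⟩ := huniv
  set x := d * star d with hx
  have hcomm : Commute d (star d) := rel3
  have hdx : Commute d x := (Commute.refl d).mul_right hcomm
  have hsx : Commute (star d) x := hcomm.symm.mul_right (Commute.refl (star d))
  -- key factorizations
  have key1 : ∀ k : ℕ, star d * (x ^ k * d) = x ^ (k+1) := by
    intro k
    rw [← (hdx.pow_right k).eq, ← mul_assoc, ← hcomm.eq, ← pow_succ']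
  have key2 : ∀ k : ℕ, d * (x ^ k * star d) = x ^ (k+1) := by
    intro k
    rw [← (hsx.pow_right k).eq, ← mul_assoc, ← hx, ← pow_succ']
  -- graded membership of powers of x
  have hx0 : ∀ k : ℕ, x ^ k ∈ 𝒜 0 := by
    intro k
    induction k with
    | zero => simpa using SetLike.one_mem_graded 𝒜
    | succ k ih =>
      rw [pow_succ]
      simpa using SetLike.mul_mem_graded ih (SetLike.mul_mem_graded hd hds)
  have gen1 : ∀ k : ℕ, x ^ (k+1) ∈ 𝒜 1 * 𝒜 (-1) := by
    intro k
    rw [← key1 k]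
    exact Submodule.mul_mem_mul hds (by simpa using SetLike.mul_mem_graded (hx0 k) hd)
  have gen2 : ∀ k : ℕ, x ^ (k+1) ∈ 𝒜 (-1) * 𝒜 1 := by
    intro k
    rw [← key2 k]
    exact Submodule.mul_mem_mul hd (by simpa using SetLike.mul_mem_graded (hx0 k) hds)
  -- 1 ∈ 𝒜 1 * 𝒜 (-1)
  have h1 : (1 : A) ∈ 𝒜 1 * 𝒜 (-1) := by
    obtain ⟨y, hyN, hprod⟩ := prod_one_sub_smul x ((List.range l).map fun m => ((q:ℂ) ^ (2*m)))
    rw [List.map_map] at hprod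
    have h4 : c * star c = 1 + y := by rw [rel4, ← hprod]; rfl
    have hyM : y ∈ 𝒜 1 * 𝒜 (-1) :=
      Submodule.span_le.2 (by rintro _ ⟨k, rfl⟩; exact gen1 k) hyN
    have := (𝒜 1 * 𝒜 (-1)).sub_mem (Submodule.mul_mem_mul hc hcs) hyM
    rwa [h4, add_sub_cancel_right] at this
  have h2 : (1 : A) ∈ 𝒜 (-1) * 𝒜 1 := by
    obtain ⟨y, hyN, hprod⟩ :=
      prod_one_sub_smul x ((List.range l).map fun m => ((q:ℂ)⁻¹ ^ (2*(m+1))))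
    rw [List.map_map] at hprod
    have h5 : star c * c = 1 + y := by rw [rel5, ← hprod]; rfl
    have hyM : y ∈ 𝒜 (-1) * 𝒜 1 :=
      Submodule.span_le.2 (by rintro _ ⟨k, rfl⟩; exact gen2 k) hyN
    have := (𝒜 (-1) * 𝒜 1).sub_mem (Submodule.mul_mem_mul hcs hc) hyM
    rwa [h5, add_sub_cancel_right] at this
  -- strong gradedness
  have hsub : ∀ m n : ℤ, 𝒜 m * 𝒜 n ≤ 𝒜 (m + n) := fun m n =>
    Submodule.mul_le.2 fun a ha b hb => SetLike.mul_mem_graded ha hb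
  have hcomb : ∀ a b : ℤ, (1:A) ∈ 𝒜 a * 𝒜 (-a) → (1:A) ∈ 𝒜 b * 𝒜 (-b) →
      (1:A) ∈ 𝒜 (a+b) * 𝒜 (-(a+b)) := by
    intro a b ha hb
    have hle : 𝒜 a * 𝒜 (-a) ≤ 𝒜 (a+b) * 𝒜 (-(a+b)) := by
      calc 𝒜 a * 𝒜 (-a) = 𝒜 a * 1 * 𝒜 (-a) := by rw [mul_one]
        _ ≤ 𝒜 a * (𝒜 b * 𝒜 (-b)) * 𝒜 (-a) :=
          mul_le_mul' (mul_le_mul' le_rfl (Submodule.one_le.2 hb)) le_rfl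
        _ = (𝒜 a * 𝒜 b) * (𝒜 (-b) * 𝒜 (-a)) := by rw [mul_assoc, mul_assoc, mul_assoc]
        _ ≤ 𝒜 (a+b) * 𝒜 (-b + -a) := mul_le_mul' (hsub a b) (hsub (-b) (-a))
        _ = 𝒜 (a+b) * 𝒜 (-(a+b)) := by rw [neg_add, add_comm (-b)]
    exact hle ha
  have hone : ∀ n : ℤ, (1:A) ∈ 𝒜 n * 𝒜 (-n) := by
    intro n
    induction n using Int.induction_on with
    | zero =>
      have h00 : (1:A) * 1 ∈ 𝒜 0 * 𝒜 0 :=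
        Submodule.mul_mem_mul (SetLike.one_mem_graded 𝒜) (SetLike.one_mem_graded 𝒜)
      simpa using h00
    | succ k ih => simpa using hcomb k 1 ih (by simpa using h1)
    | pred k ih =>
      have := hcomb (-k) (-1) ih (by simpa using h2)
      have e : (-k + -1 : ℤ) = -k - 1 := by ring
      rw [e] at this
      exact this
  refine ⟨fun m n => le_antisymm (hsub m n) ?_, h1, h2⟩
  have hone' : (1:A) ∈ 𝒜 (-n) * 𝒜 n := by simpa using hone (-n)
  calc 𝒜 (m+n) = 𝒜 (m+n) * 1 := by rw [mul_one]
    _ ≤ 𝒜 (m+n) * (𝒜 (-n) * 𝒜 n) :=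
      mul_le_mul' le_rfl (Submodule.one_le.2 hone')
    _ = (𝒜 (m+n) * 𝒜 (-n)) * 𝒜 n := by rw [mul_assoc]
    _ ≤ 𝒜 (m+n + -n) * 𝒜 n := mul_le_mul' (hsub (m+n) (-n)) le_rfl
    _ = 𝒜 m * 𝒜 n := by rw [add_neg_cancel_right]
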